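/- If f : [a,b] → ℝ is continuous, then its monotone reordering f^# : (0, b-a] → ℝ is continuous. -/

import Mathlib

open MeasureTheory Set

/-- The monotone reordering of `f : [a,b] → ℝ`:
`f^#(t) = inf { s : t ≤ length of {t' ∈ [a,b] : f t' ≤ s} }`. -/
noncomputable def monRe (f : ℝ → ℝ) (a b : ℝ) (t : ℝ) : ℝ :=
  sInf { s : ℝ | t ≤ (volume { x ∈ Icc a b | f x ≤ s }).toReal }

/-- The distribution function `μ s = |{x ∈ [a,b] : f x ≤ s}|`. -/
noncomputable def muRe (f : ℝ → ℝ) (a b s : ℝ) : ℝ :=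
  (volume { x ∈ Icc a b | f x ≤ s }).toReal

lemma monRe_eq (f : ℝ → ℝ) (a b t : ℝ) :
    monRe f a b t = sInf { s : ℝ | t ≤ muRe f a b s } := rfl

lemma muRe_fin (f : ℝ → ℝ) (a b : ℝ) (s : ℝ) :
    volume { x ∈ Icc a b | f x ≤ s } ≠ ⊤ := by
  refine ne_top_of_le_ne_top ?_ (measure_mono (sep_subset _ _))
  simp [Real.volume_Icc]

lemma muRe_nonneg (f : ℝ → ℝ) (a b s : ℝ) : 0 ≤ muRe f a b s :=
  ENNReal.toReal_nonneg

lemma muRe_le (f : ℝ → ℝ) {a b : ℝ} (hab : a ≤ b) (s : ℝ) :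
    muRe f a b s ≤ b - a := by
  have h1 : volume { x ∈ Icc a b | f x ≤ s } ≤ volume (Icc a b) :=
    measure_mono (sep_subset _ _)
  have h2 : (volume (Icc a b)).toReal = b - a := by
    simp [Real.volume_Icc, ENNReal.toReal_ofReal (sub_nonneg.2 hab)]
  calc muRe f a b s ≤ (volume (Icc a b)).toReal := by
        apply ENNReal.toReal_mono _ h1
        simp [Real.volume_Icc]
    _ = b - a := h2

lemma muRe_mono (f : ℝ → ℝ) (a b : ℝ) : Monotone (muRe f a b) := by
  intro s c hsc
  apply ENNReal.toReal_mono (muRe_fin f a b c)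
  exact measure_mono fun x hx => ⟨hx.1, hx.2.trans hsc⟩

/-- Key strict monotonicity: if `f` takes a value strictly between `s` and `c`,
then `μ s < μ c`. -/
lemma muRe_strict (f : ℝ → ℝ) {a b : ℝ} (hab : a < b) (hf : ContinuousOn f (Icc a b))
    {s c : ℝ} (hx : ∃ x ∈ Icc a b, s < f x ∧ f x < c) :
    muRe f a b s < muRe f a b c := by
  obtain ⟨x0, hx0, h1, h2⟩ := hx
  have hcw : ContinuousWithinAt f (Icc a b) x0 := hf x0 hx0
  have hmem : f ⁻¹' (Ioo s c) ∈ nhdsWithin x0 (Icc a b) :=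
    hcw.preimage_mem_nhdsWithin (Ioo_mem_nhds h1 h2)
  rw [Metric.mem_nhdsWithin_iff] at hmem
  obtain ⟨δ, hδ, hball⟩ := hmem
  set c1 := max a (x0 - δ) with hc1
  set c2 := min b (x0 + δ) with hc2
  have hc12 : c1 < c2 := by
    apply max_lt <;> apply lt_min
    · exact hab
    · linarith [hx0.1]
    · linarith [hx0.2]
    · linarith
  have hN : Ioo c1 c2 ⊆ f ⁻¹' (Ioo s c) := by
    intro y hy
    apply hball
    constructor
    · rw [Real.ball_eq_Ioo]
      exact ⟨lt_of_le_of_lt (le_max_right _ _) hy.1, lt_of_lt_of_le hy.2 (min_le_right _ _)⟩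
    · exact ⟨(le_max_left _ _).trans hy.1.le, hy.2.le.trans (min_le_left _ _)⟩
  have hNI : Ioo c1 c2 ⊆ Icc a b := fun y hy =>
    ⟨(le_max_left _ _).trans hy.1.le, hy.2.le.trans (min_le_left _ _)⟩
  -- S s ∪ Ioo c1 c2 ⊆ S c, disjointly
  have hsc : s < c := h1.trans h2
  have hsub : { x ∈ Icc a b | f x ≤ s } ∪ Ioo c1 c2 ⊆ { x ∈ Icc a b | f x ≤ c } := by
    rintro y (hy | hy)
    · exact ⟨hy.1, hy.2.trans hsc.le⟩
    · exact ⟨hNI hy, (hN hy).2.le⟩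
  have hdisj : Disjoint { x ∈ Icc a b | f x ≤ s } (Ioo c1 c2) := by
    rw [Set.disjoint_left]
    intro y hy hy'
    exact absurd hy.2 (not_le.2 (hN hy').1)
  have hunion : volume ({ x ∈ Icc a b | f x ≤ s } ∪ Ioo c1 c2)
      = volume { x ∈ Icc a b | f x ≤ s } + volume (Ioo c1 c2) :=
    measure_union hdisj measurableSet_Ioo
  have hposN : volume (Ioo c1 c2) ≠ 0 := by
    rw [Real.volume_Ioo]
    simp only [ne_eq, ENNReal.ofReal_eq_zero, not_le]
    linarith
  have hlt : volume { x ∈ Icc a b | f x ≤ s } < volume { x ∈ Icc a b | f x ≤ c } := by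
    calc volume { x ∈ Icc a b | f x ≤ s }
        < volume { x ∈ Icc a b | f x ≤ s } + volume (Ioo c1 c2) :=
          ENNReal.lt_add_right (muRe_fin f a b s) hposN
      _ = volume ({ x ∈ Icc a b | f x ≤ s } ∪ Ioo c1 c2) := hunion.symm
      _ ≤ volume { x ∈ Icc a b | f x ≤ c } := measure_mono hsub
  exact (ENNReal.toReal_lt_toReal (muRe_fin f a b s) (muRe_fin f a b c)).2 hlt

theorem monRe_continuousOn (f : ℝ → ℝ) (a b : ℝ) (hab : a ≤ b)
    (hf : ContinuousOn f (Icc a b)) :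
    ContinuousOn (monRe f a b) (Ioc 0 (b - a)) := by
  rcases eq_or_lt_of_le hab with rfl | hab'
  · simp only [sub_self, Set.Ioc_self]
    exact continuousOn_empty _
  set L := b - a with hL
  have hL0 : 0 < L := sub_pos.2 hab'
  set μ := muRe f a b with hμ
  have hne : (Icc a b).Nonempty := ⟨a, le_refl a, hab⟩
  obtain ⟨xm, hxm, hmin⟩ := isCompact_Icc.exists_isMinOn hne hf
  obtain ⟨xM, hxM, hmax⟩ := isCompact_Icc.exists_isMaxOn hne hf
  set m := f xm with hm
  set M := f xM with hM
  have hmM : m ≤ M := hmin hxM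
  have hrange : Icc m M ⊆ f '' Icc a b := by
    have hpc : IsPreconnected (f '' Icc a b) := (isPreconnected_Icc).image f hf
    exact hpc.ordConnected.out (mem_image_of_mem f hxm) (mem_image_of_mem f hxM)
  -- the sets A t
  set A : ℝ → Set ℝ := fun t => { s : ℝ | t ≤ μ s } with hA
  have hμM : μ M = L := by
    have : { x ∈ Icc a b | f x ≤ M } = Icc a b := by
      ext x; simp only [mem_setOf_eq, mem_sep_iff, and_iff_left_iff_imp]
      exact fun hx => hmax hx
    rw [hμ, muRe, this, Real.volume_Icc, ENNReal.toReal_ofReal (sub_nonneg.2 hab)]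
  have hMA : ∀ t ≤ L, M ∈ A t := fun t ht => by
    simp only [hA, mem_setOf_eq, hμM]; exact ht
  have hAne : ∀ t ≤ L, (A t).Nonempty := fun t ht => ⟨M, hMA t ht⟩
  have hlb : ∀ t > 0, m ∈ lowerBounds (A t) := by
    intro t ht s hs
    by_contra h
    push_neg at h
    have hempty : { x ∈ Icc a b | f x ≤ s } = ∅ := by
      ext x
      simp only [mem_sep_iff, mem_empty_iff_false, iff_false, not_and, not_le]
      exact fun hx => lt_of_lt_of_le h (hmin hx)
    have : μ s = 0 := by rw [hμ, muRe, hempty]; simp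
    rw [hA] at hs
    simp only [mem_setOf_eq, this] at hs
    linarith
  have hbdd : ∀ t > 0, BddBelow (A t) := fun t ht => ⟨m, hlb t ht⟩
  -- basic bounds for g
  set g := monRe f a b with hg
  have hg_eq : ∀ t, g t = sInf (A t) := fun t => rfl
  have hg_le_M : ∀ t ∈ Ioc 0 L, g t ≤ M := fun t ht =>
    csInf_le (hbdd t ht.1) (hMA t ht.2)
  have hg_ge_m : ∀ t ∈ Ioc 0 L, m ≤ g t := fun t ht =>
    le_csInf (hAne t ht.2) (fun s hs => hlb t ht.1 hs)
  have hg_mono : MonotoneOn g (Ioc 0 L) := by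
    intro t1 ht1 t2 ht2 h12
    exact csInf_le_csInf (hbdd t1 ht1.1) (hAne t2 ht2.2)
      (fun s hs => le_trans h12 hs)
  -- surjectivity onto (m, M]
  have hsurj : ∀ z, m < z → z ≤ M → ∃ t ∈ Ioc 0 L, g t = z := by
    intro z hmz hzM
    have hpos : 0 < μ z := by
      have h1 : μ (m - 1) < μ z :=
        muRe_strict f hab' hf ⟨xm, hxm, by rw [← hm]; linarith, hmz⟩
      have h0 : 0 ≤ μ (m - 1) := muRe_nonneg f a b _
      linarith
    have hle : μ z ≤ L := muRe_le f hab z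
    refine ⟨μ z, ⟨hpos, hle⟩, ?_⟩
    apply le_antisymm
    · exact csInf_le (hbdd _ hpos) (le_refl (μ z))
    · apply le_csInf (hAne _ hle)
      intro s hs
      by_contra h
      push_neg at h
      have hslt : μ s < μ z := by
        rcases lt_or_ge s m with hsm | hms
        · exact muRe_strict f hab' hf ⟨xm, hxm, by rw [← hm]; exact hsm, hmz⟩
        · obtain ⟨x, hx, hfx⟩ :=
            hrange (show (s + z) / 2 ∈ Icc m M from ⟨by linarith, by linarith⟩)
          exact muRe_strict f hab' hf
            ⟨x, hx, by rw [hfx]; linarith, by rw [hfx]; linarith⟩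
      rw [hA] at hs
      simp only [mem_setOf_eq] at hs
      linarith
  -- main continuity argument
  intro t ht
  obtain ⟨ht0, htL⟩ := ht
  have htIoc : t ∈ Ioc 0 L := ⟨ht0, htL⟩
  -- left continuity within Ioc 0 L ∩ Iic t
  have hleft : ContinuousWithinAt g (Ioc 0 L ∩ Iic t) t := by
    by_cases hc : g t = m
    · -- g is constant (= m) on Ioc 0 L ∩ Iic t
      have hconst : ContinuousWithinAt (fun _ : ℝ => g t) (Ioc 0 L ∩ Iic t) t :=
        continuousWithinAt_const
      apply hconst.congr
      · intro y hy
        have hy1 : y ∈ Ioc 0 L := hy.1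
        have h1 : g y ≤ g t := hg_mono hy1 htIoc hy.2
        have h2 : m ≤ g y := hg_ge_m y hy1
        rw [hc] at h1 ⊢
        linarith
      · rfl
    · have hm_lt : m < g t := lt_of_le_of_ne (hg_ge_m t htIoc) (Ne.symm hc)
      have hcw : ContinuousWithinAt g (Iic t) t := by
        apply continuousWithinAt_left_of_monotoneOn_of_exists_between hg_mono
        · exact Ioc_mem_nhdsLE_of_mem htIoc
        · intro y hy
          obtain ⟨z, hz1, hz2⟩ := exists_between (max_lt hy hm_lt)
          have hmz : m < z := lt_of_le_of_lt (le_max_right _ _) hz1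
          have hzM : z ≤ M := le_trans hz2.le (hg_le_M t htIoc)
          obtain ⟨t', ht', hgt'⟩ := hsurj z hmz hzM
          exact ⟨t', ht', by
            rw [hgt']; exact ⟨lt_of_le_of_lt (le_max_left _ _) hz1, hz2⟩⟩
      exact hcw.mono inter_subset_right
  -- right continuity within Ioc 0 L ∩ Ici t
  have hLIoc : L ∈ Ioc 0 L := ⟨hL0, le_refl L⟩
  have hright : ContinuousWithinAt g (Ioc 0 L ∩ Ici t) t := by
    by_cases hc : g t = g L
    · have hconst : ContinuousWithinAt (fun _ : ℝ => g t) (Ioc 0 L ∩ Ici t) t :=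
        continuousWithinAt_const
      apply hconst.congr
      · intro y hy
        have hy1 : y ∈ Ioc 0 L := hy.1
        have h1 : g t ≤ g y := hg_mono htIoc hy1 hy.2
        have h2 : g y ≤ g L := hg_mono hy1 hLIoc hy1.2
        rw [hc] at h1 ⊢
        linarith
      · rfl
    · have htL' : t < L := by
        rcases lt_or_eq_of_le htL with h | h
        · exact h
        · exact absurd (by rw [h]) hc
      have hgtL : g t < g L := lt_of_le_of_ne (hg_mono htIoc hLIoc htL) hc
      have hcw : ContinuousWithinAt g (Ici t) t := by
        apply continuousWithinAt_right_of_monotoneOn_of_exists_between hg_mono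
        · exact Filter.mem_of_superset (Ico_mem_nhdsGE_of_mem ⟨le_refl t, htL'⟩)
            (fun y hy => ⟨lt_of_lt_of_le ht0 hy.1, hy.2.le⟩)
        · intro y hy
          obtain ⟨z, hz1, hz2⟩ := exists_between (lt_min hy hgtL)
          have hmz : m < z := lt_of_le_of_lt (hg_ge_m t htIoc) hz1
          have hzM : z ≤ M := le_trans (lt_of_lt_of_le hz2 (min_le_right _ _)).le
            (hg_le_M L hLIoc)
          obtain ⟨t', ht', hgt'⟩ := hsurj z hmz hzM
          exact ⟨t', ht', by
            rw [hgt']; exact ⟨hz1, lt_of_lt_of_le hz2 (min_le_left _ _)⟩⟩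
      exact hcw.mono inter_subset_right
  have := hleft.union hright
  rwa [← inter_union_distrib_left, Iic_union_Ici, inter_univ] at this
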